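/- Let p be an odd prime and ℓ = (p−1)/2. For every real N > 1 and all reals 1 ≤ R_1 ≤ R_2 ≤ ⋯ ≤ R_{ℓ+1}, the Lebesgue measure of the region {x ∈ ℝ_{>0}^{p−1} : R_1 ≤ x_1 < x_2 < ⋯ < x_ℓ ≤ R_{ℓ+1}; x_i > R_i for each 1 ≤ i ≤ ℓ; and 1 < x_1·x_2⋯x_k < N for every k with ℓ+1 ≤ k ≤ p−1} equals (N−1)·(log N)^{ℓ−1} · μ_I(W(R_1,…,R_{ℓ+1})), where μ_I(W(R_1,…,R_{ℓ+1})) = ∫_{W} ∏_{i=1}^{ℓ} dx_i/x_i and W(R_1,…,R_{ℓ+1}) = {x ∈ ℝ^ℓ : R_1 ≤ x_1 < ⋯ < x_ℓ ≤ R_{ℓ+1}, x_i > R_i for each i}. -/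

import Mathlib

open MeasureTheory Finset

/-- The region `W(R_1, …, R_{ℓ+1}) = {y ∈ ℝ^ℓ : R_1 ≤ y_1 < ⋯ < y_ℓ ≤ R_{ℓ+1}, y_i > R_i}`
(coordinates 0-indexed, the bounds `R` 1-indexed). -/
def shapeRegion (ℓ : ℕ) (R : ℕ → ℝ) : Set (Fin ℓ → ℝ) :=
  {y | (∀ i j : Fin ℓ, i < j → y i < y j) ∧
    ∀ i : Fin ℓ, R ((i : ℕ) + 1) < y i ∧ y i ≤ R (ℓ + 1)}

/-- The region of `x ∈ ℝ_{>0}^{p−1}` with `R_1 ≤ x_1 < ⋯ < x_ℓ ≤ R_{ℓ+1}`, `x_i > R_i` for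
`1 ≤ i ≤ ℓ`, and `1 < x_1⋯x_k < N` for every `ℓ+1 ≤ k ≤ p−1` (coordinates 0-indexed). -/
def tupleRegion (p : ℕ) (N : ℝ) (R : ℕ → ℝ) : Set (Fin (p - 1) → ℝ) :=
  {x | (∀ i, 0 < x i) ∧
    (∀ i j : Fin (p - 1), (j : ℕ) < (p - 1) / 2 → i < j → x i < x j) ∧
    (∀ i : Fin (p - 1), (i : ℕ) < (p - 1) / 2 →
      R ((i : ℕ) + 1) < x i ∧ x i ≤ R ((p - 1) / 2 + 1)) ∧
    (∀ k : ℕ, (p - 1) / 2 + 1 ≤ k → k ≤ p - 1 →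
      1 < ∏ j ∈ Finset.univ.filter (fun j : Fin (p - 1) => (j : ℕ) < k), x j ∧
        ∏ j ∈ Finset.univ.filter (fun j : Fin (p - 1) => (j : ℕ) < k), x j < N)}

noncomputable section VolumeAux

/-- Partial product of the first `k` coordinates. -/
def pp {n : ℕ} (z : Fin n → ℝ) (k : ℕ) : ℝ :=
  ∏ j ∈ Finset.univ.filter (fun j : Fin n => (j : ℕ) < k), z j

lemma pp_zero {n : ℕ} (z : Fin n → ℝ) : pp z 0 = 1 := by
  simp [pp]

lemma pp_cons {n : ℕ} (a : ℝ) (z : Fin n → ℝ) (k : ℕ) :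
    pp (Fin.cons a z) (k + 1) = a * pp z k := by
  simp only [pp, Finset.prod_filter, Fin.prod_univ_succ, Fin.cons_zero, Fin.cons_succ,
    Fin.val_zero, Fin.val_succ]
  rw [if_pos (by omega)]
  congr 1
  refine Finset.prod_congr rfl fun j _ => ?_
  by_cases h : (j : ℕ) < k
  · rw [if_pos (by omega), if_pos h]
  · rw [if_neg (by omega), if_neg h]

lemma measurable_pp {n : ℕ} (k : ℕ) : Measurable fun z : Fin n → ℝ => pp z k :=
  Finset.measurable_prod _ fun j _ => measurable_pi_apply j

/-- The tail region: positive tuples all of whose partial products, scaled by `c`,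
lie in `(1, N)`. -/
def tailSet (N : ℝ) (n : ℕ) (c : ℝ) : Set (Fin n → ℝ) :=
  {z | (∀ i, 0 < z i) ∧ ∀ k : ℕ, 1 ≤ k → k ≤ n → 1 < c * pp z k ∧ c * pp z k < N}

lemma measurableSet_tailSet (N : ℝ) (n : ℕ) (c : ℝ) : MeasurableSet (tailSet N n c) := by
  have h1 : MeasurableSet {z : Fin n → ℝ | ∀ i, 0 < z i} := by
    rw [show {z : Fin n → ℝ | ∀ i, 0 < z i} = ⋂ i, {z | 0 < z i} by ext z; simp]
    exact MeasurableSet.iInter fun i =>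
      measurableSet_lt measurable_const (measurable_pi_apply i)
  have h2 : MeasurableSet {z : Fin n → ℝ |
      ∀ k : ℕ, 1 ≤ k → k ≤ n → 1 < c * pp z k ∧ c * pp z k < N} := by
    rw [show {z : Fin n → ℝ | ∀ k : ℕ, 1 ≤ k → k ≤ n → 1 < c * pp z k ∧ c * pp z k < N}
      = ⋂ k, ⋂ (_ : 1 ≤ k), ⋂ (_ : k ≤ n), ({z | 1 < c * pp z k} ∩ {z | c * pp z k < N}) by
        ext z; simp [Set.mem_iInter]]
    refine MeasurableSet.iInter fun k => MeasurableSet.iInter fun _ =>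
      MeasurableSet.iInter fun _ => MeasurableSet.inter ?_ ?_
    · exact measurableSet_lt measurable_const (measurable_const.mul (measurable_pp k))
    · exact measurableSet_lt (measurable_const.mul (measurable_pp k)) measurable_const
  exact (h1.inter h2 : _)

lemma scaled_mem_Ioo_iff {N c a : ℝ} (hc : 0 < c) :
    (1 < c * a ∧ c * a < N) ↔ a ∈ Set.Ioo (1/c) (N/c) := by
  rw [Set.mem_Ioo, div_lt_iff₀ hc, lt_div_iff₀ hc]
  constructor
  · rintro ⟨h1, h2⟩; constructor <;> nlinarith
  · rintro ⟨h1, h2⟩; constructor <;> nlinarith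

lemma tailSet_one (N : ℝ) (c : ℝ) (hc : 0 < c) :
    tailSet N 1 c = (MeasurableEquiv.funUnique (Fin 1) ℝ) ⁻¹' Set.Ioo (1/c) (N/c) := by
  have hpp : ∀ z : Fin 1 → ℝ, pp z 1 = z 0 := by
    intro z
    rw [pp, Finset.filter_true_of_mem (fun j _ => by omega), Fin.prod_univ_one]
  ext z
  simp only [tailSet, Set.mem_setOf_eq, Set.mem_preimage, MeasurableEquiv.funUnique_apply]
  constructor
  · rintro ⟨-, hcond⟩
    have := hcond 1 le_rfl le_rfl
    rw [hpp] at this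
    have : z 0 ∈ Set.Ioo (1/c) (N/c) := (scaled_mem_Ioo_iff hc).mp this
    simpa using this
  · intro hz
    have hz0 : z 0 ∈ Set.Ioo (1/c) (N/c) := by simpa using hz
    have hcond := (scaled_mem_Ioo_iff hc).mpr hz0
    refine ⟨?_, ?_⟩
    · intro i
      have hi : i = 0 := Subsingleton.elim _ _
      subst hi
      have h1c : 0 < 1/c := by positivity
      exact lt_trans h1c hz0.1
    · intro k h1 h2
      have : k = 1 := by omega
      subst this
      rw [hpp]
      exact hcond

lemma tail_vol (N : ℝ) (hN : 1 < N) :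
    ∀ n : ℕ, ∀ c : ℝ, 0 < c →
      volume (tailSet N (n + 1) c) =
        ENNReal.ofReal ((N - 1) * Real.log N ^ n * c⁻¹) := by
  intro n
  induction n with
  | zero =>
    intro c hc
    rw [tailSet_one N c hc]
    erw [(volume_preserving_funUnique (Fin 1) ℝ).measure_preimage
        measurableSet_Ioo.nullMeasurableSet]
    rw [Real.volume_Ioo]
    congr 1
    rw [pow_zero]
    field_simp
  | succ n ih =>
    intro c hc
    set e := MeasurableEquiv.piFinSuccAbove (fun _ : Fin (n + 2) => ℝ) 0 with he
    set T : Set (ℝ × (Fin (n + 1) → ℝ)) :=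
      {q | (1 < c * q.1 ∧ c * q.1 < N) ∧ q.2 ∈ tailSet N (n + 1) (c * q.1)} with hT
    have hm : ∀ k, Measurable fun q : ℝ × (Fin (n+1) → ℝ) => (c * q.1) * pp q.2 k :=
      fun k => (measurable_const.mul measurable_fst).mul ((measurable_pp k).comp measurable_snd)
    have hT_meas : MeasurableSet T := by
      have h1 : MeasurableSet {q : ℝ × (Fin (n+1) → ℝ) | 1 < c * q.1} :=
        measurableSet_lt measurable_const (measurable_const.mul measurable_fst)
      have h2 : MeasurableSet {q : ℝ × (Fin (n+1) → ℝ) | c * q.1 < N} :=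
        measurableSet_lt (measurable_const.mul measurable_fst) measurable_const
      have h3 : MeasurableSet {q : ℝ × (Fin (n+1) → ℝ) | ∀ i, 0 < q.2 i} := by
        rw [show {q : ℝ × (Fin (n+1) → ℝ) | ∀ i, 0 < q.2 i} = ⋂ i, {q | 0 < q.2 i} by
          ext; simp]
        exact MeasurableSet.iInter fun i => measurableSet_lt measurable_const
          (measurable_snd.eval)
      have h4 : MeasurableSet {q : ℝ × (Fin (n+1) → ℝ) |
          ∀ k, 1 ≤ k → k ≤ n+1 → 1 < (c*q.1) * pp q.2 k ∧ (c*q.1) * pp q.2 k < N} := by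
        rw [show {q : ℝ × (Fin (n+1) → ℝ) |
            ∀ k, 1 ≤ k → k ≤ n+1 → 1 < (c*q.1) * pp q.2 k ∧ (c*q.1) * pp q.2 k < N}
          = ⋂ k, ⋂ (_ : 1 ≤ k), ⋂ (_ : k ≤ n+1),
            ({q : ℝ × (Fin (n+1) → ℝ) | 1 < (c*q.1) * pp q.2 k} ∩
              {q | (c*q.1) * pp q.2 k < N}) by
          ext q; simp]
        exact MeasurableSet.iInter fun k => MeasurableSet.iInter fun _ =>
          MeasurableSet.iInter fun _ =>
          (measurableSet_lt measurable_const (hm k)).inter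
            (measurableSet_lt (hm k) measurable_const)
      have hTeq : T = ({q : ℝ × (Fin (n+1) → ℝ) | 1 < c * q.1} ∩ {q | c * q.1 < N}) ∩
          ({q | ∀ i, 0 < q.2 i} ∩ {q | ∀ k, 1 ≤ k → k ≤ n+1 →
            1 < (c*q.1) * pp q.2 k ∧ (c*q.1) * pp q.2 k < N}) := by
        ext q; simp only [hT, Set.mem_setOf_eq, Set.mem_inter_iff, tailSet]; try tauto
      rw [hTeq]
      exact (h1.inter h2).inter (h3.inter h4)
    have hpre : e.symm ⁻¹' tailSet N (n + 2) c = T := by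
      ext q
      obtain ⟨a, z⟩ := q
      have hcons : e.symm (a, z) = Fin.cons a z := by
        simp [he, Fin.insertNth_zero', Fin.consEquiv]
      simp only [Set.mem_preimage, hcons, hT, Set.mem_setOf_eq, tailSet]
      constructor
      · rintro ⟨hpos, hcond⟩
        have h1 := hcond 1 le_rfl (by omega)
        have hpp1 : pp (Fin.cons a z) 1 = a := by simpa [pp_zero] using pp_cons a z 0
        rw [hpp1] at h1
        refine ⟨h1, fun i => hpos i.succ, ?_⟩
        intro k hk1 hk2
        have h2 := hcond (k+1) (by omega) (by omega)
        rw [pp_cons, ← mul_assoc] at h2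
        exact h2
      · rintro ⟨⟨ha1, ha2⟩, hzpos, hzcond⟩
        have ha : 0 < a := by nlinarith
        constructor
        · intro i
          refine Fin.cases ?_ ?_ i
          · simpa using ha
          · intro j; simpa using hzpos j
        · intro k hk1 hk2
          obtain ⟨m, rfl⟩ : ∃ m, k = m + 1 := ⟨k - 1, by omega⟩
          rw [pp_cons, ← mul_assoc]
          rcases Nat.eq_zero_or_pos m with hm0 | hm0
          · subst hm0; rw [pp_zero, mul_one]; exact ⟨ha1, ha2⟩
          · exact hzcond m hm0 (by omega)
    have hmp := MeasurePreserving.symm _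
      (volume_preserving_piFinSuccAbove (fun _ : Fin (n + 2) => ℝ) 0)
    have h1 : volume (tailSet N (n + 2) c) = volume T := by
      rw [← hpre]
      exact (hmp.measure_preimage (measurableSet_tailSet N (n+2) c).nullMeasurableSet).symm
    rw [h1, Measure.volume_eq_prod, Measure.prod_apply hT_meas]
    have hpoint : ∀ a : ℝ, volume (Prod.mk a ⁻¹' T) =
        Set.indicator (Set.Ioo (1/c) (N/c))
          (fun a => ENNReal.ofReal ((N - 1) * Real.log N ^ n * (c * a)⁻¹)) a := by
      intro a
      by_cases ha : a ∈ Set.Ioo (1/c) (N/c)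
      · rw [Set.indicator_of_mem ha]
        have hac : (1 < c * a ∧ c * a < N) := (scaled_mem_Ioo_iff hc).mpr ha
        have hpre2 : Prod.mk a ⁻¹' T = tailSet N (n+1) (c*a) := by
          ext z; simp only [hT, Set.mem_preimage, Set.mem_setOf_eq]
          exact and_iff_right hac
        rw [hpre2]
        exact ih (c*a) (by nlinarith [hac.1])
      · rw [Set.indicator_of_notMem ha]
        have hemp : Prod.mk a ⁻¹' T = ∅ := by
          ext z
          simp only [hT, Set.mem_preimage, Set.mem_setOf_eq, Set.mem_empty_iff_false, iff_false]
          rintro ⟨hac, -⟩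
          exact ha ((scaled_mem_Ioo_iff hc).mp hac)
        rw [hemp, measure_empty]
    rw [lintegral_congr hpoint, lintegral_indicator measurableSet_Ioo]
    have hlo : 0 < 1/c := by positivity
    have hhi : 0 < N/c := by positivity
    have hle : 1/c ≤ N/c := by gcongr
    have heq : ∀ a : ℝ, (N-1) * Real.log N ^ n * (c*a)⁻¹ =
        ((N-1) * Real.log N ^ n / c) * a⁻¹ := by
      intro a; rw [mul_inv]; ring
    simp only [heq]
    have hKc : 0 ≤ (N-1) * Real.log N ^ n / c := by
      apply div_nonneg _ hc.le
      exact mul_nonneg (by linarith) (pow_nonneg (Real.log_nonneg hN.le) n)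
    have hint : IntegrableOn (fun a : ℝ => ((N-1) * Real.log N ^ n / c) * a⁻¹)
        (Set.Ioo (1/c) (N/c)) := by
      apply Integrable.const_mul
      have hcont : ContinuousOn (fun a : ℝ => a⁻¹) (Set.Icc (1/c) (N/c)) := by
        apply ContinuousOn.inv₀ continuousOn_id
        intro x hx; exact ne_of_gt (lt_of_lt_of_le hlo hx.1)
      exact hcont.integrableOn_Icc.mono_set Set.Ioo_subset_Icc_self
    have hnn : 0 ≤ᵐ[volume.restrict (Set.Ioo (1/c) (N/c))]
        fun a : ℝ => ((N-1) * Real.log N ^ n / c) * a⁻¹ := by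
      refine (ae_restrict_iff' measurableSet_Ioo).2 (ae_of_all _ fun a ha => ?_)
      have hap : 0 < a := lt_trans hlo ha.1
      exact mul_nonneg hKc (inv_nonneg.2 hap.le)
    rw [← MeasureTheory.ofReal_integral_eq_lintegral_ofReal hint hnn,
      MeasureTheory.integral_const_mul]
    have hIoo : ∫ a in Set.Ioo (1/c) (N/c), a⁻¹ = Real.log N := by
      rw [← MeasureTheory.integral_Ioc_eq_integral_Ioo,
        ← intervalIntegral.integral_of_le hle,
        integral_inv_of_pos hlo hhi]
      congr 1
      field_simp
    rw [hIoo]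
    congr 1
    rw [pow_succ]
    ring

lemma tail_vol' (N : ℝ) (hN : 1 < N) (n : ℕ) (hn : 1 ≤ n) (c : ℝ) (hc : 0 < c) :
    volume (tailSet N n c) = ENNReal.ofReal ((N - 1) * Real.log N ^ (n - 1) * c⁻¹) := by
  obtain ⟨k, rfl⟩ : ∃ k, n = k + 1 := ⟨n - 1, by omega⟩
  simpa using tail_vol N hN k c hc

lemma prod_transfer {L L' : ℕ} (h : L = L') (x : Fin L → ℝ) (k : ℕ) :
    ∏ j ∈ Finset.univ.filter (fun j : Fin L => (j:ℕ) < k), x j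
      = ∏ j ∈ Finset.univ.filter (fun j : Fin L' => (j:ℕ) < k), x (Fin.cast h.symm j) := by
  subst h; rfl

lemma prod_split (ℓ : ℕ) (x : Fin (ℓ+ℓ) → ℝ) (m : ℕ) :
    ∏ j ∈ Finset.univ.filter (fun j : Fin (ℓ+ℓ) => (j:ℕ) < ℓ + m), x j =
      (∏ i : Fin ℓ, x (Fin.castAdd ℓ i)) *
        ∏ i ∈ Finset.univ.filter (fun i : Fin ℓ => (i:ℕ) < m), x (Fin.natAdd ℓ i) := by
  rw [Finset.prod_filter, Finset.prod_filter, Fin.prod_univ_add]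
  congr 1
  · refine Finset.prod_congr rfl fun i _ => ?_
    rw [if_pos (by have := i.isLt; simp only [Fin.coe_castAdd]; omega)]
  · refine Finset.prod_congr rfl fun i _ => ?_
    refine if_congr ?_ rfl rfl
    simp only [Fin.coe_natAdd]
    omega

lemma measurableSet_shapeRegion (ℓ : ℕ) (R : ℕ → ℝ) : MeasurableSet (shapeRegion ℓ R) := by
  have h1 : MeasurableSet {y : Fin ℓ → ℝ | ∀ i j : Fin ℓ, i < j → y i < y j} := by
    rw [show {y : Fin ℓ → ℝ | ∀ i j : Fin ℓ, i < j → y i < y j}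
      = ⋂ i, ⋂ j, ⋂ (_ : i < j), {y : Fin ℓ → ℝ | y i < y j} by ext y; simp]
    exact MeasurableSet.iInter fun i => MeasurableSet.iInter fun j =>
      MeasurableSet.iInter fun _ =>
      measurableSet_lt (measurable_pi_apply i) (measurable_pi_apply j)
  have h2 : MeasurableSet {y : Fin ℓ → ℝ |
      ∀ i : Fin ℓ, R ((i:ℕ)+1) < y i ∧ y i ≤ R (ℓ+1)} := by
    rw [show {y : Fin ℓ → ℝ | ∀ i : Fin ℓ, R ((i:ℕ)+1) < y i ∧ y i ≤ R (ℓ+1)}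
      = ⋂ i : Fin ℓ, ({y : Fin ℓ → ℝ | R ((i:ℕ)+1) < y i} ∩ {y | y i ≤ R (ℓ+1)}) by
        ext y; simp [forall_and]]
    exact MeasurableSet.iInter fun i =>
      (measurableSet_lt measurable_const (measurable_pi_apply i)).inter
        (measurableSet_le (measurable_pi_apply i) measurable_const)
  rw [shapeRegion, Set.setOf_and]
  exact h1.inter h2

end VolumeAux

/-- The Lebesgue volume of the region of positive `(p−1)`-tuples of bounded partial
products with prescribed shape conditions equals
`(N−1)·(log N)^(ℓ−1)·μ_I(W(R_1,…,R_{ℓ+1}))`, where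
`μ_I(W) = ∫_W ∏ dx_i/x_i` and `ℓ = (p−1)/2`. -/
theorem volume_tupleRegion
    (p : ℕ) (hp : p.Prime) (hodd : Odd p)
    (N : ℝ) (hN : 1 < N) (R : ℕ → ℝ) (hR1 : 1 ≤ R 1)
    (hRmono : ∀ i : ℕ, 1 ≤ i → i ≤ (p - 1) / 2 → R i ≤ R (i + 1)) :
    volume (tupleRegion p N R) =
      ENNReal.ofReal ((N - 1) * Real.log N ^ ((p - 1) / 2 - 1) *
        ∫ y in shapeRegion ((p - 1) / 2) R, (∏ i, (y i)⁻¹)) := by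
  classical
  obtain ⟨m, hm⟩ := hodd
  have hp2 : 2 ≤ p := hp.two_le
  have hp3 : 3 ≤ p := by omega
  set ℓ := (p - 1) / 2 with hℓdef
  have hsum : p - 1 = ℓ + ℓ := by omega
  have hℓ1 : 1 ≤ ℓ := by omega
  -- monotonicity chain for R
  have hRle : ∀ k : ℕ, 1 ≤ k → k ≤ ℓ + 1 → R 1 ≤ R k := by
    intro k
    induction k with
    | zero => omega
    | succ j ih =>
      intro _ hle
      rcases Nat.eq_zero_or_pos j with h0 | hj
      · subst h0; exact le_rfl
      · exact (ih hj (by omega)).trans (hRmono j hj (by omega))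
  have hRchain : ∀ k : ℕ, 1 ≤ k → k ≤ ℓ + 1 → (1:ℝ) ≤ R k :=
    fun k h1 h2 => hR1.trans (hRle k h1 h2)
  set W := shapeRegion ℓ R with hWdef
  have hW_meas : MeasurableSet W := measurableSet_shapeRegion ℓ R
  have hWpos : ∀ y ∈ W, ∀ i : Fin ℓ, 1 < y i := by
    intro y hy i
    have h := hy.2 i
    have hi := i.isLt
    exact lt_of_le_of_lt (hRchain ((i:ℕ)+1) (by omega) (by omega)) h.1
  have hWprod : ∀ y ∈ W, 1 ≤ ∏ i, y i := by
    intro y hy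
    have h := Finset.prod_le_prod (s := Finset.univ) (f := fun _ : Fin ℓ => (1:ℝ)) (g := y)
      (fun i _ => by norm_num) (fun i _ => (hWpos y hy i).le)
    simpa using h
  -- the measurable equivalences
  set E := MeasurableEquiv.piCongrLeft (fun _ : Fin (p-1) => ℝ)
    ((finSumFinEquiv : Fin ℓ ⊕ Fin ℓ ≃ Fin (ℓ+ℓ)).trans (finCongr hsum.symm)) with hE
  set e2 := MeasurableEquiv.sumPiEquivProdPi (fun _ : Fin ℓ ⊕ Fin ℓ => ℝ) with he2
  have hcoord : ∀ x : Fin (p-1) → ℝ,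
      e2 (E.symm x) = (fun i : Fin ℓ => x (Fin.cast hsum.symm (Fin.castAdd ℓ i)),
        fun i : Fin ℓ => x (Fin.cast hsum.symm (Fin.natAdd ℓ i))) := by
    intro x
    refine Prod.ext ?_ ?_ <;> funext i <;>
      simp [hE, he2, MeasurableEquiv.piCongrLeft, MeasurableEquiv.sumPiEquivProdPi,
        Equiv.piCongrLeft_symm_apply, Equiv.sumPiEquivProdPi, finCongr]
  set S : Set ((Fin ℓ → ℝ) × (Fin ℓ → ℝ)) :=
    {q | q.1 ∈ W ∧ q.2 ∈ tailSet N ℓ (∏ i, q.1 i)} with hS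
  have hS_meas : MeasurableSet S := by
    have hmk : ∀ k, Measurable fun q : (Fin ℓ → ℝ) × (Fin ℓ → ℝ) =>
        (∏ i, q.1 i) * pp q.2 k := by
      intro k
      apply Measurable.mul
      · exact Finset.measurable_prod _ fun i _ =>
          (measurable_fst.eval :
            Measurable fun q : (Fin ℓ → ℝ) × (Fin ℓ → ℝ) => q.1 i)
      · exact (measurable_pp k).comp measurable_snd
    have h1 : MeasurableSet {q : (Fin ℓ → ℝ) × (Fin ℓ → ℝ) | q.1 ∈ W} :=
      measurable_fst hW_meas
    have h3 : MeasurableSet {q : (Fin ℓ → ℝ) × (Fin ℓ → ℝ) | ∀ i, 0 < q.2 i} := by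
      rw [show {q : (Fin ℓ → ℝ) × (Fin ℓ → ℝ) | ∀ i, 0 < q.2 i} = ⋂ i, {q | 0 < q.2 i} by
        ext; simp]
      exact MeasurableSet.iInter fun i =>
        measurableSet_lt measurable_const (measurable_snd.eval)
    have h4 : MeasurableSet {q : (Fin ℓ → ℝ) × (Fin ℓ → ℝ) |
        ∀ k, 1 ≤ k → k ≤ ℓ → 1 < (∏ i, q.1 i) * pp q.2 k ∧ (∏ i, q.1 i) * pp q.2 k < N} := by
      rw [show {q : (Fin ℓ → ℝ) × (Fin ℓ → ℝ) |
          ∀ k, 1 ≤ k → k ≤ ℓ → 1 < (∏ i, q.1 i) * pp q.2 k ∧ (∏ i, q.1 i) * pp q.2 k < N}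
        = ⋂ k, ⋂ (_ : 1 ≤ k), ⋂ (_ : k ≤ ℓ),
          ({q : (Fin ℓ → ℝ) × (Fin ℓ → ℝ) | 1 < (∏ i, q.1 i) * pp q.2 k} ∩
            {q | (∏ i, q.1 i) * pp q.2 k < N}) by
        ext q; simp]
      exact MeasurableSet.iInter fun k => MeasurableSet.iInter fun _ =>
        MeasurableSet.iInter fun _ =>
        (measurableSet_lt measurable_const (hmk k)).inter
          (measurableSet_lt (hmk k) measurable_const)
    have hSeq : S = {q : (Fin ℓ → ℝ) × (Fin ℓ → ℝ) | q.1 ∈ W} ∩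
        ({q | ∀ i, 0 < q.2 i} ∩ {q | ∀ k, 1 ≤ k → k ≤ ℓ →
          1 < (∏ i, q.1 i) * pp q.2 k ∧ (∏ i, q.1 i) * pp q.2 k < N}) := by
      ext q; simp only [hS, Set.mem_setOf_eq, Set.mem_inter_iff, tailSet]; try tauto
    rw [hSeq]
    exact h1.inter (h3.inter h4)
  -- the key product-splitting identity
  have key : ∀ (x : Fin (p-1) → ℝ) (mm : ℕ),
      ∏ j ∈ Finset.univ.filter (fun j : Fin (p-1) => (j:ℕ) < ℓ + mm), x j =
        (∏ i : Fin ℓ, x (Fin.cast hsum.symm (Fin.castAdd ℓ i))) *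
          pp (fun i : Fin ℓ => x (Fin.cast hsum.symm (Fin.natAdd ℓ i))) mm := by
    intro x mm
    rw [prod_transfer hsum x (ℓ + mm), prod_split ℓ (fun j => x (Fin.cast hsum.symm j)) mm]
    rfl
  -- the region as a preimage
  have hiff : ∀ x : Fin (p-1) → ℝ, x ∈ tupleRegion p N R ↔
      ((fun i : Fin ℓ => x (Fin.cast hsum.symm (Fin.castAdd ℓ i))) ∈ W ∧
        (fun i : Fin ℓ => x (Fin.cast hsum.symm (Fin.natAdd ℓ i))) ∈
          tailSet N ℓ (∏ i : Fin ℓ, x (Fin.cast hsum.symm (Fin.castAdd ℓ i)))) := by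
    intro x
    simp only [tupleRegion, Set.mem_setOf_eq, ← hℓdef, hWdef, shapeRegion, tailSet]
    have hca : ∀ i : Fin ℓ, ((Fin.cast hsum.symm (Fin.castAdd ℓ i)) : ℕ) = (i:ℕ) := by
      intro i; simp
    have hna : ∀ i : Fin ℓ, ((Fin.cast hsum.symm (Fin.natAdd ℓ i)) : ℕ) = ℓ + (i:ℕ) := by
      intro i; simp; try omega
    constructor
    · rintro ⟨hA, hB, hC, hD⟩
      refine ⟨⟨?_, ?_⟩, ?_, ?_⟩
      · intro i j hij
        refine hB _ _ ?_ ?_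
        · rw [hca j]; exact j.isLt
        · rw [Fin.lt_def, hca i, hca j]; exact hij
      · intro i
        have h := hC _ (by rw [hca i]; exact i.isLt)
        rwa [hca i] at h
      · intro i
        exact hA _
      · intro k hk1 hk2
        have hd := hD (ℓ + k) (by omega) (by omega)
        rwa [key x k] at hd
    · rintro ⟨⟨hinc, hbd⟩, hzpos, hzcond⟩
      have hxca : ∀ (i : Fin (p-1)) (hi : (i:ℕ) < ℓ),
          x (Fin.cast hsum.symm (Fin.castAdd ℓ ⟨(i:ℕ), hi⟩)) = x i := by
        intro i hi; rfl
      have hxna : ∀ (i : Fin (p-1)) (hi : ℓ ≤ (i:ℕ)),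
          x (Fin.cast hsum.symm (Fin.natAdd ℓ
            ⟨(i:ℕ) - ℓ, by have := i.isLt; omega⟩)) = x i := by
        intro i hi; congr 1; apply Fin.ext; simp; try omega
      refine ⟨?_, ?_, ?_, ?_⟩
      · intro i
        by_cases hi : (i:ℕ) < ℓ
        · have h := hbd ⟨(i:ℕ), hi⟩
          rw [hxca i hi] at h
          have h1R := hRchain ((i:ℕ)+1) (by omega) (by omega)
          linarith [h.1]
        · have h := hzpos ⟨(i:ℕ) - ℓ, by have := i.isLt; omega⟩
          rwa [hxna i (le_of_not_gt hi)] at h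
      · intro i j hjl hij
        have hij' : (i:ℕ) < (j:ℕ) := hij
        have hil : (i:ℕ) < ℓ := by omega
        have h := hinc ⟨(i:ℕ), hil⟩ ⟨(j:ℕ), hjl⟩ (by rw [Fin.lt_def]; exact hij')
        rwa [hxca i hil, hxca j hjl] at h
      · intro i hi
        have h := hbd ⟨(i:ℕ), hi⟩
        rwa [hxca i hi] at h
      · intro k hk1 hk2
        obtain ⟨mm, rfl⟩ : ∃ mm, k = ℓ + mm := ⟨k - ℓ, by omega⟩
        rw [key x mm]
        exact hzcond mm (by omega) (by omega)
  have hpre : tupleRegion p N R = ⇑E.symm ⁻¹' (⇑e2 ⁻¹' S) := by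
    ext x
    rw [Set.mem_preimage, Set.mem_preimage, hcoord x, hiff x]
    simp only [hS, Set.mem_setOf_eq]
  have hmpE : MeasurePreserving E volume volume :=
    volume_measurePreserving_piCongrLeft (fun _ : Fin (p-1) => ℝ) _
  have hmpE' := MeasurePreserving.symm _ hmpE
  have hmp2 : MeasurePreserving e2 volume volume :=
    volume_measurePreserving_sumPiEquivProdPi (fun _ : Fin ℓ ⊕ Fin ℓ => ℝ)
  have hvol1 : volume (tupleRegion p N R) = volume S := by
    rw [hpre, hmpE'.measure_preimage
        ((e2.measurableSet_preimage.2 hS_meas)).nullMeasurableSet,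
      hmp2.measure_preimage hS_meas.nullMeasurableSet]
  rw [hvol1, Measure.volume_eq_prod, Measure.prod_apply hS_meas]
  have hK : 0 ≤ (N - 1) * Real.log N ^ (ℓ - 1) :=
    mul_nonneg (by linarith) (pow_nonneg (Real.log_nonneg hN.le) _)
  have hpoint : ∀ y : Fin ℓ → ℝ, volume (Prod.mk y ⁻¹' S) =
      Set.indicator W
        (fun y => ENNReal.ofReal ((N-1) * Real.log N ^ (ℓ-1) * (∏ i, y i)⁻¹)) y := by
    intro y
    by_cases hy : y ∈ W
    · rw [Set.indicator_of_mem hy]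
      have hps : Prod.mk y ⁻¹' S = tailSet N ℓ (∏ i, y i) := by
        ext z; simp only [hS, Set.mem_preimage, Set.mem_setOf_eq]
        exact and_iff_right hy
      rw [hps]
      exact tail_vol' N hN ℓ hℓ1 (∏ i, y i) (lt_of_lt_of_le zero_lt_one (hWprod y hy))
    · rw [Set.indicator_of_notMem hy]
      have hemp : Prod.mk y ⁻¹' S = ∅ := by
        ext z
        simp only [hS, Set.mem_preimage, Set.mem_setOf_eq, Set.mem_empty_iff_false, iff_false]
        rintro ⟨h1, -⟩
        exact hy h1
      rw [hemp, measure_empty]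
  rw [lintegral_congr hpoint, lintegral_indicator hW_meas]
  have hg_meas : Measurable fun y : Fin ℓ → ℝ => (∏ i, y i)⁻¹ :=
    (Finset.measurable_prod _ fun i _ => measurable_pi_apply i).inv
  have hof_meas : Measurable fun y : Fin ℓ → ℝ => ENNReal.ofReal ((∏ i, y i)⁻¹) :=
    hg_meas.ennreal_ofReal
  have h0 : 0 ≤ᵐ[volume.restrict W] fun y : Fin ℓ → ℝ => (∏ i, y i)⁻¹ :=
    (ae_restrict_iff' hW_meas).2 (ae_of_all _ fun y hy =>
      inv_nonneg.2 (zero_le_one.trans (hWprod y hy)))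
  have hfin : (∫⁻ y in W, ENNReal.ofReal ((∏ i, y i)⁻¹)) ≠ ⊤ := by
    have hb : ∀ᵐ y ∂(volume.restrict W), ENNReal.ofReal ((∏ i, y i)⁻¹) ≤ 1 := by
      refine (ae_restrict_iff' hW_meas).2 (ae_of_all _ fun y hy => ?_)
      rw [show (1 : ENNReal) = ENNReal.ofReal 1 by simp]
      refine ENNReal.ofReal_le_ofReal ?_
      have hp1 : (0:ℝ) < ∏ i, y i := lt_of_lt_of_le zero_lt_one (hWprod y hy)
      rw [inv_le_one_iff₀]
      right
      exact hWprod y hy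
    have h1 : (∫⁻ y in W, ENNReal.ofReal ((∏ i, y i)⁻¹)) ≤ volume W := by
      calc (∫⁻ y in W, ENNReal.ofReal ((∏ i, y i)⁻¹)) ≤ ∫⁻ _ in W, 1 :=
            lintegral_mono_ae hb
        _ = volume W := by rw [setLIntegral_one]
    have hWle : volume W ≤
        volume (Set.pi Set.univ fun _ : Fin ℓ => Set.Ioc (R 1) (R (ℓ+1))) := by
      apply measure_mono
      intro y hy
      rw [Set.mem_univ_pi]
      intro i
      have h := hy.2 i
      have hi := i.isLt
      exact ⟨lt_of_le_of_lt (hRle ((i:ℕ)+1) (by omega) (by omega)) h.1, h.2⟩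
    have hbox : volume (Set.pi Set.univ fun _ : Fin ℓ => Set.Ioc (R 1) (R (ℓ+1))) < ⊤ := by
      rw [volume_pi_pi]
      exact ENNReal.prod_lt_top fun i _ => by
        rw [Real.volume_Ioc]; exact ENNReal.ofReal_lt_top
    exact (h1.trans_lt (hWle.trans_lt hbox)).ne
  have hprodinv : ∀ y : Fin ℓ → ℝ, (∏ i, (y i)⁻¹) = (∏ i, y i)⁻¹ := fun y => by
    rw [← Finset.prod_inv_distrib]
  simp only [hprodinv]
  rw [MeasureTheory.integral_eq_lintegral_of_nonneg_ae h0 hg_meas.aestronglyMeasurable,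
    ENNReal.ofReal_mul hK, ENNReal.ofReal_toReal hfin]
  simp only [ENNReal.ofReal_mul hK]
  rw [lintegral_const_mul _ hof_meas]
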